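/- For every real number c with 1 < c < √3 there exist a rational number ε > 0 and a positive even integer k such that k/(1+ε) is an integer, (1+ε)·log₂(c) < 1, and the number of Boolean vectors s of length k that satisfy s_{2i−1} ≤ s_{2i} for every i ∈ {1, ..., k/2} and have exactly k/2 coordinates equal to 1 is at least 2^{k/(1+ε)}. -/

import Mathlib

/-- The state space of an `N`-dimensional Boolean network. -/
abbrev BState (N : ℕ) := Fin N → Bool

/-- The attractor (eventual periodic orbit) reached from initial condition `s`:
the set of states visited infinitely often by the trajectory `t ↦ f^[t] s`. -/
def attractor {N : ℕ} (f : BState N → BState N) (s : BState N) : Set (BState N) :=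
  {x | ∀ T : ℕ, ∃ t ≥ T, f^[t] s = x}

/-- The network `f` is `p`-`c`-chaotic: more than `p·2^N` initial conditions
reach an attractor of length `> c^N`. -/
def pcChaotic {N : ℕ} (f : BState N → BState N) (p c : ℝ) : Prop :=
  p * 2 ^ N < (({s : BState N | (c : ℝ) ^ N < ((attractor f s).ncard : ℝ)}).ncard : ℝ)

/-- Ordered pairs of states at Hamming distance exactly 1. -/
def PerturbPairs (N : ℕ) : Set (BState N × BState N) :=
  {q | hammingDist q.1 q.2 = 1}

/-- `p`-coalescence: more than `p·N·2^N` perturbation pairs have trajectories that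
coincide at some positive time. -/
def pCoalescent {N : ℕ} (f : BState N → BState N) (p : ℝ) : Prop :=
  p * ((N : ℝ) * 2 ^ N) <
    (({q ∈ PerturbPairs N | ∃ t > 0, f^[t] q.1 = f^[t] q.2}).ncard : ℝ)

/-- `p`-instability: at least `p·N·2^N` perturbation pairs reach different attractors. -/
def pUnstable {N : ℕ} (f : BState N → BState N) (p : ℝ) : Prop :=
  p * ((N : ℝ) * 2 ^ N) ≤
    (({q ∈ PerturbPairs N | attractor f q.1 ≠ attractor f q.2}).ncard : ℝ)

/-- Coordinate `j` is an input of coordinate `i` of `f` (equivalently, `i` is an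
output of `j`): the `i`-th coordinate of `f` depends on the `j`-th coordinate. -/
def isInput {N : ℕ} (f : BState N → BState N) (j i : Fin N) : Prop :=
  ∃ s s' : BState N, (∀ k, k ≠ j → s k = s' k) ∧ f s i ≠ f s' i

/-- Every coordinate has at most 2 inputs and at most 2 outputs. -/
def biQuadratic {N : ℕ} (f : BState N → BState N) : Prop :=
  ∀ i : Fin N, ({j | isInput f j i}.ncard ≤ 2) ∧ ({j | isInput f i j}.ncard ≤ 2)

/-- Bi-quadratic and every coordinate has exactly 2 inputs. -/
def strictlyBiQuadratic {N : ℕ} (f : BState N → BState N) : Prop :=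
  biQuadratic f ∧ ∀ i : Fin N, {j | isInput f j i}.ncard = 2

/-- `p`-`α`-decoherence: at least `p·N·2^N` perturbation pairs have Hamming distance
`≥ α·N` at infinitely many times `t > 0`. -/
def pAlphaDecoherent {N : ℕ} (f : BState N → BState N) (p α : ℝ) : Prop :=
  p * ((N : ℝ) * 2 ^ N) ≤
    (({q ∈ PerturbPairs N |
        ∀ T : ℕ, ∃ t > T,
          α * N ≤ (hammingDist (f^[t] q.1) (f^[t] q.2) : ℝ)}).ncard : ℝ)

/-- `p`-`α`-`q`-decoherence: at least `p·N·2^N` perturbation pairs are such that, for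
all sufficiently large `t*`, the Hamming distance is `≥ α·N` on at least a proportion
`q` of the times `t ∈ {0, …, t*}`. -/
def pAlphaQDecoherent {N : ℕ} (f : BState N → BState N) (p α q : ℝ) : Prop :=
  p * ((N : ℝ) * 2 ^ N) ≤
    (({r ∈ PerturbPairs N |
        ∃ T₀ : ℕ, ∀ tstar : ℕ, T₀ ≤ tstar →
          q * ((tstar : ℝ) + 1) ≤
            (({t : ℕ | t ≤ tstar ∧
                α * N ≤ (hammingDist (f^[t] r.1) (f^[t] r.2) : ℝ)}).ncard : ℝ)}).ncard : ℝ)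

open Finset in
private def pidx {n : ℕ} (i : Fin (2*n)) : Fin n := ⟨i.val/2, by omega⟩

private def d0 {n : ℕ} : Fin n ↪ Fin (2*n) :=
  ⟨fun p => ⟨2*p.val, by omega⟩, by intro a b h; rw [Fin.ext_iff] at *; simpa using h⟩

private def d1 {n : ℕ} : Fin n ↪ Fin (2*n) :=
  ⟨fun p => ⟨2*p.val+1, by omega⟩, by intro a b h; rw [Fin.ext_iff] at *; simp at h; omega⟩

private def Phi {n : ℕ} (P Q : Finset (Fin n)) (i : Fin (2*n)) : Bool :=
  decide (pidx i ∈ P ∨ (pidx i ∈ Q ∧ i.val % 2 = 1))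

open Finset in
private theorem phi_filter {n : ℕ} (P Q : Finset (Fin n)) :
    univ.filter (fun i => Phi P Q i = true) = P.map d0 ∪ (P ∪ Q).map d1 := by
  ext i
  simp only [mem_filter, mem_univ, true_and, Phi, decide_eq_true_eq, mem_union, mem_map,
    d0, d1, Function.Embedding.coeFn_mk, DFunLike.coe, Fin.ext_iff]
  constructor
  · rintro (hp | ⟨hq, hodd⟩)
    · rcases Nat.mod_two_eq_zero_or_one i.val with he | ho
      · exact Or.inl ⟨pidx i, hp, by simp [pidx]; omega⟩
      · exact Or.inr ⟨pidx i, Or.inl hp, by simp [pidx]; omega⟩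
    · exact Or.inr ⟨pidx i, Or.inr hq, by simp [pidx]; omega⟩
  · rintro (⟨a, ha, hai⟩ | ⟨a, ha, hai⟩)
    · have : pidx i = a := by rw [Fin.ext_iff]; simp [pidx]; omega
      exact Or.inl (this ▸ ha)
    · have hpa : pidx i = a := by rw [Fin.ext_iff]; simp [pidx]; omega
      rcases ha with ha | ha
      · exact Or.inl (hpa ▸ ha)
      · exact Or.inr ⟨hpa ▸ ha, by omega⟩

private theorem fact_bound (j : ℕ) :
    27^j * (Nat.factorial j)^3 ≤ Nat.factorial (3*j) * (3*j+1)^2 := by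
  induction j with
  | zero => simp [Nat.factorial]
  | succ j ih =>
    have h2 : Nat.factorial (3*(j+1)) = (3*j+3)*((3*j+2)*((3*j+1)*Nat.factorial (3*j))) := by
      have : 3*(j+1) = ((3*j)+1)+1+1 := by ring
      rw [this, Nat.factorial_succ, Nat.factorial_succ, Nat.factorial_succ]
    have h3 : Nat.factorial (j+1) = (j+1) * Nat.factorial j := Nat.factorial_succ j
    calc 27^(j+1) * (Nat.factorial (j+1))^3
        = (27^j * (Nat.factorial j)^3) * (27*(j+1)^3) := by rw [h3]; ring
      _ ≤ (Nat.factorial (3*j) * (3*j+1)^2) * (27*(j+1)^3) := Nat.mul_le_mul_right _ ih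
      _ ≤ Nat.factorial (3*(j+1)) * (3*(j+1)+1)^2 := by
          rw [h2]
          nlinarith [Nat.factorial_pos (3*j), sq_nonneg j, j.zero_le]

private theorem choose_bound (j : ℕ) :
    27^j ≤ (3*j).choose j * ((2*j).choose j) * (3*j+1)^2 := by
  have e1 : (3*j).choose j * Nat.factorial j * Nat.factorial (2*j) = Nat.factorial (3*j) := by
    have h := Nat.choose_mul_factorial_mul_factorial (show j ≤ 3*j by omega)
    rwa [show 3*j - j = 2*j by omega] at h
  have e2 : (2*j).choose j * Nat.factorial j * Nat.factorial j = Nat.factorial (2*j) := by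
    have h := Nat.choose_mul_factorial_mul_factorial (show j ≤ 2*j by omega)
    rwa [show 2*j - j = j by omega] at h
  have key := fact_bound j
  have hfe : Nat.factorial (3*j) = (3*j).choose j * ((2*j).choose j) * (Nat.factorial j)^3 := by
    rw [← e1, ← e2]; ring
  rw [hfe] at key
  have hpos : 0 < (Nat.factorial j)^3 := pow_pos (Nat.factorial_pos j) _
  have h5 : 27^j * (Nat.factorial j)^3 ≤
      ((3*j).choose j * ((2*j).choose j) * (3*j+1)^2) * (Nat.factorial j)^3 := by
    calc 27^j * (Nat.factorial j)^3
        ≤ (3*j).choose j * (2*j).choose j * (Nat.factorial j)^3 * (3*j+1)^2 := key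
      _ = ((3*j).choose j * ((2*j).choose j) * (3*j+1)^2) * (Nat.factorial j)^3 := by ring
  exact Nat.le_of_mul_le_mul_right (by simpa [mul_comm] using h5) hpos

open Finset in
set_option maxHeartbeats 1000000 in
private theorem count_lemma (j : ℕ) :
    ((3*j).choose j * ((2*j).choose j) : ℕ) ≤
      ({s : Fin (2*(3*j)) → Bool |
          (∀ i : Fin (2*(3*j)), Even (i : ℕ) → ∀ h : (i : ℕ) + 1 < 2*(3*j),
            s i ≤ s ⟨(i : ℕ) + 1, h⟩) ∧
          (Finset.univ.filter fun i => s i = true).card = 2*(3*j) / 2}).ncard := by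
  classical
  set n := 3*j with hn
  rw [Set.ncard_eq_toFinset_card']
  set T : Finset ((_ : Finset (Fin n)) × Finset (Fin n)) :=
    (univ.powersetCard j).sigma (fun P => Pᶜ.powersetCard j) with hTdef
  have hT : T.card = (3*j).choose j * ((2*j).choose j) := by
    rw [hTdef, Finset.card_sigma]
    have : ∀ P ∈ (univ : Finset (Fin n)).powersetCard j,
        (Pᶜ.powersetCard j).card = (2*j).choose j := by
      intro P hP
      rw [Finset.mem_powersetCard] at hP
      rw [Finset.card_powersetCard, Finset.card_compl, Fintype.card_fin, hP.2,
        show n - j = 2*j by omega]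
    rw [Finset.sum_congr rfl this, Finset.sum_const, Finset.card_powersetCard,
      Finset.card_univ, Fintype.card_fin, smul_eq_mul]
  rw [← hT]
  apply Finset.card_le_card_of_injOn (fun x => Phi x.1 x.2)
  · rintro ⟨P, Q⟩ hx
    rw [Finset.mem_coe, hTdef, Finset.mem_sigma, Finset.mem_powersetCard, Finset.mem_powersetCard] at hx
    obtain ⟨⟨-, hPc⟩, hQsub, hQc⟩ := hx
    have hdisj : Disjoint P Q := by
      rw [Finset.disjoint_left]
      intro a haP haQ
      exact (Finset.mem_compl.mp (hQsub haQ)) haP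
    simp only [Finset.mem_coe, Set.mem_toFinset]
    constructor
    · intro i hie h
      have hmod : i.val % 2 = 0 := Nat.even_iff.mp hie
      have hpe : pidx (⟨i.val+1, h⟩ : Fin (2*n)) = pidx i := by
        rw [Fin.ext_iff]; simp [pidx]; omega
      cases hb : Phi P Q i with
      | false => exact Bool.false_le _
      | true =>
        have ht : Phi P Q ⟨i.val+1, h⟩ = true := by
          simp only [Phi, decide_eq_true_eq] at hb ⊢
          rw [hpe]
          rcases hb with hp | ⟨hq, h1⟩
          · exact Or.inl hp
          · exact absurd h1 (by omega)
        rw [ht]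
    · rw [phi_filter P Q, Finset.card_union_of_disjoint, Finset.card_map, Finset.card_map,
        Finset.card_union_of_disjoint hdisj, hPc, hQc]
      · omega
      · rw [Finset.disjoint_left]
        rintro a ha hb
        rw [Finset.mem_map] at ha hb
        obtain ⟨x, -, hx⟩ := ha
        obtain ⟨y, -, hy⟩ := hb
        rw [← hy, Fin.ext_iff] at hx
        simp [d0, d1, DFunLike.coe] at hx
        omega
  · rintro ⟨P, Q⟩ hx ⟨P', Q'⟩ hy hf
    rw [Finset.mem_coe, hTdef, Finset.mem_sigma] at hx hy
    have hQP : ∀ a, a ∈ Q → a ∉ P := fun a ha =>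
      Finset.mem_compl.mp ((Finset.mem_powersetCard.mp hx.2).1 ha)
    have hQP' : ∀ a, a ∈ Q' → a ∉ P' := fun a ha =>
      Finset.mem_compl.mp ((Finset.mem_powersetCard.mp hy.2).1 ha)
    have hfP : P = P' := by
      ext p
      have h0 := congrFun hf (d0 p)
      have hpp : pidx (d0 p : Fin (2*n)) = p := by
        rw [Fin.ext_iff]; simp [pidx, d0, DFunLike.coe]
      have hm0 : ((d0 p : Fin (2*n)) : ℕ) % 2 = 0 := by simp [d0, DFunLike.coe]
      simp only [Phi, decide_eq_decide, hpp, hm0] at h0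
      simpa using h0
    subst hfP
    have hfQ : Q = Q' := by
      ext q
      have h1 := congrFun hf (d1 q)
      have hqq : pidx (d1 q : Fin (2*n)) = q := by
        rw [Fin.ext_iff]; simp [pidx, d1, DFunLike.coe]; omega
      have hm1 : ((d1 q : Fin (2*n)) : ℕ) % 2 = 1 := by simp [d1, DFunLike.coe]
      simp only [Phi, decide_eq_decide, hqq, hm1] at h1
      constructor
      · intro hq
        rcases h1.mp (Or.inr ⟨hq, trivial⟩) with hp | hq'
        · exact absurd hp (hQP q hq)
        · exact hq'.1
      · intro hq'
        rcases h1.mpr (Or.inr ⟨hq', trivial⟩) with hp | hq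
        · exact absurd hp (hQP' q hq')
        · exact hq.1
    subst hfQ
    rfl

private theorem pow_ineq (a dn t : ℕ)
    (h : 2 * Real.log (3*(dn:ℝ)*(t:ℝ)+1) ≤
      (t:ℝ) * (3*(dn:ℝ)*Real.log 3 - 6*(a:ℝ)*Real.log 2)) :
    (2:ℝ)^(6*a*t) * (3*((dn*t : ℕ):ℝ)+1)^2 ≤ 27^(dn*t) := by
  rw [← Real.log_le_log_iff (by positivity) (by positivity),
    Real.log_mul (by positivity) (by positivity), Real.log_pow, Real.log_pow,
    show (27:ℝ) = 3^(3:ℕ) by norm_num, ← pow_mul, Real.log_pow]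
  push_cast
  ring_nf at h ⊢
  nlinarith [h]


set_option maxHeartbeats 1000000 in
/-- Lemma 5.1: for `1 < c < √3` there exist a positive rational `ε` and a positive even
integer `k` such that `(k, ε)` is `c`-friendly under the robust coding scheme:
`k/(1+ε)` is an integer, `(1+ε)·log₂ c < 1`, and `|C_k| ≥ 2^{k/(1+ε)}`, where `C_k` is
the set of Boolean vectors of length `k` with `s_{2i−1} ≤ s_{2i}` on consecutive pairs
and exactly `k/2` ones. -/
theorem robust_coding_c_friendly_pair_exists
    (c : ℝ) (hc1 : 1 < c) (hc3 : c < Real.sqrt 3) :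
    ∃ ε : ℚ, 0 < ε ∧ ∃ k : ℕ, 0 < k ∧ Even k ∧
      (∃ m : ℤ, (k : ℚ) / (1 + ε) = (m : ℚ)) ∧
      (1 + (ε : ℝ)) * Real.logb 2 c < 1 ∧
      (2 : ℝ) ^ ((k : ℝ) / (1 + (ε : ℝ))) ≤
        (({s : Fin k → Bool |
            (∀ i : Fin k, Even (i : ℕ) → ∀ h : (i : ℕ) + 1 < k,
              s i ≤ s ⟨(i : ℕ) + 1, h⟩) ∧
            (Finset.univ.filter fun i => s i = true).card = k / 2}).ncard : ℝ) := by
  have hc0 : (0:ℝ) < c := lt_trans one_pos hc1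
  have hlog2 : (0:ℝ) < Real.log 2 := Real.log_pos one_lt_two
  have hlog3 : (0:ℝ) < Real.log 3 := Real.log_pos (by norm_num)
  set x := Real.logb 2 c with hx
  have hx0 : 0 < x := Real.logb_pos one_lt_two hc1
  have hxy : x < Real.logb 2 3 / 2 := by
    have h1 : x < Real.logb 2 (Real.sqrt 3) := Real.logb_lt_logb one_lt_two hc0 hc3
    have h2 : Real.logb 2 (Real.sqrt 3) = Real.logb 2 3 / 2 := by
      rw [Real.logb, Real.logb, Real.log_sqrt (by norm_num)]; ring
    linarith
  obtain ⟨β, hβ1, hβ2⟩ := exists_rat_btwn hxy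
  have hβr0 : (0:ℝ) < (β:ℝ) := lt_trans hx0 hβ1
  have hβ0 : 0 < β := by exact_mod_cast hβr0
  have hy1 : Real.logb 2 3 / 2 < 1 := by
    have h4 : Real.logb 2 4 = 2 := by
      rw [Real.logb, show (4:ℝ) = 2^(2:ℕ) by norm_num, Real.log_pow]; field_simp; norm_num
    have h5 : Real.logb 2 3 < Real.logb 2 4 :=
      Real.logb_lt_logb one_lt_two (by norm_num) (by norm_num)
    linarith
  have hβ1' : β < 1 := by exact_mod_cast lt_trans hβ2 hy1
  set ε : ℚ := β⁻¹ - 1 with hε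
  have hεpos : 0 < ε := by
    have h6 : 1 < β⁻¹ := one_lt_inv_iff₀.mpr ⟨hβ0, hβ1'⟩
    rw [hε]; linarith
  have h1ε : 1 + ε = β⁻¹ := by rw [hε]; ring
  set a : ℕ := β.num.toNat with ha
  set dn : ℕ := β.den with hdn
  have hnum_pos : 0 < β.num := Rat.num_pos.mpr hβ0
  have hβeq : (a:ℚ) / (dn:ℚ) = β := by
    rw [ha, hdn]
    rw [show ((β.num.toNat : ℕ) : ℚ) = ((β.num : ℤ) : ℚ) by
      exact_mod_cast congrArg (fun z : ℤ => (z:ℚ)) (Int.toNat_of_nonneg hnum_pos.le)]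
    exact Rat.num_div_den β
  have hdn0 : 0 < dn := β.pos
  have hd1 : (1:ℝ) ≤ (dn:ℝ) := by exact_mod_cast hdn0
  have hβreq : (β:ℝ) = (a:ℝ) / (dn:ℝ) := by
    rw [← hβeq]; push_cast; rfl
  have hδpos : 0 < 3*(dn:ℝ)*Real.log 3 - 6*(a:ℝ)*Real.log 2 := by
    have h5 : (β:ℝ) < Real.log 3 / (2*Real.log 2) := by
      have h7 : Real.logb 2 3 / 2 = Real.log 3/(2*Real.log 2) := by rw [Real.logb]; ring
      linarith
    rw [hβreq, div_lt_div_iff₀ (by positivity) (by positivity)] at h5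
    nlinarith
  set δ : ℝ := 3*(dn:ℝ)*Real.log 3 - 6*(a:ℝ)*Real.log 2 with hδ
  obtain ⟨t0, ht0⟩ := exists_nat_ge (64*(dn:ℝ)/δ^2)
  set t : ℕ := t0 + 1 with htdef
  have ht1 : (1:ℝ) ≤ (t:ℝ) := by exact_mod_cast Nat.one_le_iff_ne_zero.mpr (by omega)
  have hlarge : 2 * Real.log (3*(dn:ℝ)*(t:ℝ)+1) ≤ (t:ℝ) * δ := by
    have htd : 64*(dn:ℝ) ≤ (t:ℝ) * δ^2 := by
      rw [div_le_iff₀ (by positivity)] at ht0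
      calc 64*(dn:ℝ) ≤ (t0:ℝ) * δ^2 := ht0
        _ ≤ (t:ℝ) * δ^2 := by
            have h8 : (t0:ℝ) ≤ (t:ℝ) := by rw [htdef]; exact_mod_cast Nat.le_succ t0
            nlinarith
    set u := Real.sqrt ((dn:ℝ) * (t:ℝ)) with hu
    have hu0 : 0 ≤ u := Real.sqrt_nonneg _
    have hu2 : u^2 = (dn:ℝ) * (t:ℝ) := Real.sq_sqrt (by positivity)
    have hlog : Real.log (3*(dn:ℝ)*(t:ℝ)+1) ≤ 2 * Real.sqrt (3*(dn:ℝ)*(t:ℝ)+1) := by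
      have h1 : Real.log (Real.sqrt (3*(dn:ℝ)*(t:ℝ)+1)) ≤ Real.sqrt (3*(dn:ℝ)*(t:ℝ)+1) - 1 :=
        Real.log_le_sub_one_of_pos (Real.sqrt_pos.mpr (by positivity))
      have h2 : Real.log (Real.sqrt (3*(dn:ℝ)*(t:ℝ)+1)) = Real.log (3*(dn:ℝ)*(t:ℝ)+1) / 2 :=
        Real.log_sqrt (by positivity)
      nlinarith [Real.sqrt_nonneg (3*(dn:ℝ)*(t:ℝ)+1)]
    have hs4 : Real.sqrt (3*(dn:ℝ)*(t:ℝ)+1) ≤ 2 * u := by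
      rw [hu, show (2:ℝ) = Real.sqrt 4 by
          rw [show (4:ℝ) = 2^2 by norm_num, Real.sqrt_sq]; norm_num,
        ← Real.sqrt_mul (by norm_num)]
      apply Real.sqrt_le_sqrt
      nlinarith
    have h8 : 8 * u ≤ (t:ℝ) * δ := by
      nlinarith [sq_nonneg ((t:ℝ)*δ - 8*u), sq_nonneg ((t:ℝ)*δ + 8*u),
        mul_pos (lt_of_lt_of_le one_pos ht1) hδpos]
    nlinarith
  set j : ℕ := dn * t with hj
  have h1εr : (1:ℝ) + (ε:ℝ) = ((β:ℝ))⁻¹ := by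
    rw [show (1:ℝ)+(ε:ℝ) = ((1+ε : ℚ):ℝ) by push_cast; ring, h1ε, Rat.cast_inv]
  have hdnne : (dn:ℚ) ≠ 0 := by exact_mod_cast hdn0.ne'
  have hjpos : 0 < j := by
    rw [hj]; exact Nat.mul_pos hdn0 (by rw [htdef]; omega)
  refine ⟨ε, hεpos, 2*(3*j), by omega, ⟨3*j, by ring⟩, ⟨(6*a*t : ℤ), ?_⟩, ?_, ?_⟩
  · rw [h1ε, div_eq_mul_inv, inv_inv, ← hβeq, hj]
    push_cast
    field_simp
    ring
  · rw [h1εr]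
    calc (β:ℝ)⁻¹ * x < (β:ℝ)⁻¹ * (β:ℝ) :=
        mul_lt_mul_of_pos_left hβ1 (inv_pos.mpr hβr0)
      _ = 1 := inv_mul_cancel₀ hβr0.ne'
  · have hMeq : ((2*(3*j) : ℕ) : ℝ)/(1+(ε:ℝ)) = ((6*a*t : ℕ) : ℝ) := by
      rw [h1εr, div_eq_mul_inv, inv_inv, hβreq, hj]
      push_cast
      field_simp
      ring
    rw [hMeq, Real.rpow_natCast]
    have key2 : (2:ℝ)^(6*a*t) * (3*((j:ℕ):ℝ)+1)^2 ≤ 27^j := by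
      rw [hj]; exact pow_ineq a dn t hlarge
    have key1 := choose_bound j
    have key3 := count_lemma j
    have hL : (0:ℝ) < (3*((j:ℕ):ℝ)+1)^2 := by positivity
    have c1 : (27:ℝ)^j ≤
        (((3*j).choose j * ((2*j).choose j) : ℕ):ℝ) * (3*((j:ℕ):ℝ)+1)^2 := by
      exact_mod_cast key1
    have c2 : (((3*j).choose j * ((2*j).choose j) : ℕ):ℝ) ≤
        (({s : Fin (2*(3*j)) → Bool |
            (∀ i : Fin (2*(3*j)), Even (i : ℕ) → ∀ h : (i : ℕ) + 1 < 2*(3*j),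
              s i ≤ s ⟨(i : ℕ) + 1, h⟩) ∧
            (Finset.univ.filter fun i => s i = true).card = 2*(3*j) / 2}).ncard : ℝ) := by
      exact_mod_cast key3
    nlinarith [key2, c1, c2, hL]
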